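/- Let Λ be a finitely generated free ℤ-module equipped with a symmetric bilinear form B : Λ × Λ → ℤ that is unimodular, i.e., the induced map Λ → Hom_ℤ(Λ, ℤ) is an isomorphism. Let g : Λ → Λ be an isometry of B with g^N = id for a positive integer N, let Λ^g = ker(1 − g) be the invariant submodule, and let P : Λ → ℚ ⊗_ℤ Λ be the averaging operator P(x) = (1/N) ∑_{i=0}^{N-1} g^i(x). Then the image P(Λ) is contained in Λ^g ⊗ ℚ and equals the dual lattice of Λ^g, that is, P(Λ) = { x ∈ Λ^g ⊗ ℚ : B_ℚ(x, y) ∈ ℤ for all y ∈ Λ^g }, where B_ℚ denotes the ℚ-bilinear extension of B. -/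

import Mathlib

open scoped TensorProduct

/-- Let `Λ` be a finitely generated free `ℤ`-module with a unimodular
symmetric bilinear form `B`, and let `g` be an isometry of `B` with `g ^ N = 1`.  Let
`Λ^g = ker (1 - g)` and let `P : Λ → ℚ ⊗[ℤ] Λ` be the averaging operator.  Then the image of
`P` is contained in `Λ^g ⊗ ℚ` and equals the dual lattice
`{x ∈ Λ^g ⊗ ℚ : B_ℚ(x, y) ∈ ℤ for all y ∈ Λ^g}`. -/
theorem image_of_averaging_eq_dual_of_invariant_lattice
    (Λ : Type*) [AddCommGroup Λ] [Module ℤ Λ] [Module.Free ℤ Λ] [Module.Finite ℤ Λ]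
    (B : Λ →ₗ[ℤ] Λ →ₗ[ℤ] ℤ)
    (hBsymm : ∀ x y, B x y = B y x)
    (hBunimod : Function.Bijective B)
    (N : ℕ) (hN : 0 < N)
    (g : Λ →ₗ[ℤ] Λ) (hgunit : IsUnit g) (hg : g ^ N = 1)
    (hgB : ∀ x y, B (g x) (g y) = B x y)
    (P : Λ →ₗ[ℤ] ℚ ⊗[ℤ] Λ)
    (hP : ∀ x : Λ, P x = (N : ℚ)⁻¹ • ∑ i ∈ Finset.range N, (1 : ℚ) ⊗ₜ[ℤ] ((g ^ i) x))
    (Bq : (ℚ ⊗[ℤ] Λ) →ₗ[ℚ] Λ →ₗ[ℤ] ℚ)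
    (hBq : ∀ (a : ℚ) (v y : Λ), Bq (a ⊗ₜ[ℤ] v) y = a * ((B v y : ℤ) : ℚ)) :
    (LinearMap.range P : Set (ℚ ⊗[ℤ] Λ)) ⊆
      (Submodule.span ℚ
        ((fun y : Λ => (1 : ℚ) ⊗ₜ[ℤ] y) '' (LinearMap.ker (1 - g) : Set Λ)) :
          Set (ℚ ⊗[ℤ] Λ)) ∧
    (LinearMap.range P : Set (ℚ ⊗[ℤ] Λ)) =
      {x : ℚ ⊗[ℤ] Λ |
        x ∈ Submodule.span ℚ
          ((fun y : Λ => (1 : ℚ) ⊗ₜ[ℤ] y) '' (LinearMap.ker (1 - g) : Set Λ)) ∧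
        ∀ y ∈ LinearMap.ker (1 - g), ∃ n : ℤ, Bq x y = (n : ℚ)} := by

  classical
  have hNQ : (N : ℚ) ≠ 0 := Nat.cast_ne_zero.mpr hN.ne'
  -- the fixed lattice
  set K : Submodule ℤ Λ := LinearMap.ker (1 - g) with hKdef
  -- powers of g fix K pointwise
  have hfix : ∀ y ∈ K, ∀ i : ℕ, (g ^ i) y = y := by
    intro y hy i
    have h1 : g y = y := by
      have h0 : (1 - g) y = 0 := hy
      have : y - g y = 0 := by simpa [LinearMap.sub_apply] using h0
      exact (sub_eq_zero.mp this).symm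
    induction i with
    | zero => simp
    | succ n ih => rw [pow_succ, Module.End.mul_apply, h1, ih]
  -- powers of g are isometries
  have hgBpow : ∀ (i : ℕ) (x y : Λ), B ((g ^ i) x) ((g ^ i) y) = B x y := by
    intro i
    induction i with
    | zero => simp
    | succ n ih =>
      intro x y
      rw [pow_succ, Module.End.mul_apply, Module.End.mul_apply, ih, hgB]
  -- the summed operator
  set S : Λ →ₗ[ℤ] Λ := ∑ i ∈ Finset.range N, g ^ i with hSdef
  have hSapp : ∀ x, S x = ∑ i ∈ Finset.range N, (g ^ i) x := by
    intro x; simp [hSdef, LinearMap.sum_apply]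
  have hSmem : ∀ x, S x ∈ K := by
    intro x
    have hmul : (1 - g) * S = 0 := by
      have := mul_geom_sum g N
      have h2 : (1 - g) * S = -((g - 1) * S) := by rw [← neg_mul, neg_sub]
      rw [h2, hSdef, this, hg, sub_self, neg_zero]
    have : ((1 - g) * S) x = 0 := by rw [hmul]; rfl
    simpa [hKdef, LinearMap.mem_ker, Module.End.mul_apply] using this
  have hPS : ∀ x, P x = (N : ℚ)⁻¹ • ((1 : ℚ) ⊗ₜ[ℤ] (S x)) := by
    intro x
    rw [hP, hSapp, TensorProduct.tmul_sum]
  -- values of Bq on P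
  have hBq1 : ∀ (v y : Λ), Bq ((1 : ℚ) ⊗ₜ[ℤ] v) y = ((B v y : ℤ) : ℚ) := by
    intro v y; rw [hBq]; ring
  have hBqP : ∀ (x y : Λ), y ∈ K → Bq (P x) y = ((B x y : ℤ) : ℚ) := by
    intro x y hy
    rw [hPS, map_smul, LinearMap.smul_apply, hBq1, hSapp, map_sum,
      LinearMap.sum_apply]
    have hterm : ∀ i ∈ Finset.range N, B ((g ^ i) x) y = B x y := by
      intro i _
      conv_lhs => rw [← hfix y hy i]
      exact hgBpow i x y
    rw [Finset.sum_congr rfl hterm, Finset.sum_const, Finset.card_range, nsmul_eq_mul, smul_eq_mul]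
    push_cast
    field_simp
  -- P x lands in the span
  have hmem : ∀ x, P x ∈ Submodule.span ℚ
      ((fun y : Λ => (1 : ℚ) ⊗ₜ[ℤ] y) '' (LinearMap.ker (1 - g) : Set Λ)) := by
    intro x
    rw [hPS]
    exact Submodule.smul_mem _ _ (Submodule.subset_span ⟨S x, hSmem x, rfl⟩)
  -- integer scalars move across the tensor
  have hzt : ∀ (k : ℤ) (v : Λ),
      ((k : ℚ)) • ((1 : ℚ) ⊗ₜ[ℤ] v) = (1 : ℚ) ⊗ₜ[ℤ] (k • v) := by
    intro k v
    rw [Int.cast_smul_eq_zsmul ℚ]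
    exact (map_zsmul ((TensorProduct.mk ℤ ℚ Λ) 1).toAddMonoidHom k v).symm
  -- clearing denominators in the span
  have hrep : ∀ w ∈ Submodule.span ℚ
      ((fun y : Λ => (1 : ℚ) ⊗ₜ[ℤ] y) '' (LinearMap.ker (1 - g) : Set Λ)),
      ∃ (m : ℕ) (v : Λ), 0 < m ∧ v ∈ K ∧ (m : ℚ) • w = (1 : ℚ) ⊗ₜ[ℤ] v := by
    intro w hw
    induction hw using Submodule.span_induction with
    | mem w hw =>
      obtain ⟨v, hv, rfl⟩ := hw
      exact ⟨1, v, one_pos, hv, by simp⟩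
    | zero => exact ⟨1, 0, one_pos, Submodule.zero_mem K, by simp⟩
    | add w w' hw hw' ihw ihw' =>
      obtain ⟨m, v, hm, hv, heq⟩ := ihw
      obtain ⟨m', v', hm', hv', heq'⟩ := ihw'
      refine ⟨m * m', (m' : ℤ) • v + (m : ℤ) • v', Nat.mul_pos hm hm',
        Submodule.add_mem K (zsmul_mem hv _) (zsmul_mem hv' _), ?_⟩
      have : ((m * m' : ℕ) : ℚ) • (w + w')
          = (m' : ℚ) • ((m : ℚ) • w) + (m : ℚ) • ((m' : ℚ) • w') := by
        rw [smul_add, smul_smul, smul_smul]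
        push_cast
        ring_nf
      rw [this, heq, heq', TensorProduct.tmul_add]
      congr 1
      · rw [show ((m' : ℕ) : ℚ) = (((m' : ℤ) : ℚ)) by push_cast; ring]
        exact hzt _ v
      · rw [show ((m : ℕ) : ℚ) = (((m : ℤ) : ℚ)) by push_cast; ring]
        exact hzt _ v'
    | smul a w hw ihw =>
      obtain ⟨m, v, hm, hv, heq⟩ := ihw
      refine ⟨m * a.den, a.num • v, Nat.mul_pos hm a.pos,
        zsmul_mem hv _, ?_⟩
      have : ((m * a.den : ℕ) : ℚ) • (a • w) = ((a.num : ℚ)) • ((m : ℚ) • w) := by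
        rw [smul_smul, smul_smul]
        congr 1
        push_cast
        rw [mul_assoc, mul_comm ((a.den : ℚ)) a, Rat.mul_den_eq_num, mul_comm]
      rw [this, heq]
      exact hzt _ v
  -- nondegeneracy of B on the rational span of K
  have hnd : ∀ w ∈ Submodule.span ℚ
      ((fun y : Λ => (1 : ℚ) ⊗ₜ[ℤ] y) '' (LinearMap.ker (1 - g) : Set Λ)),
      (∀ y ∈ K, Bq w y = 0) → w = 0 := by
    intro w hw h0
    obtain ⟨m, v, hm, hv, heq⟩ := hrep w hw
    have hmQ : (m : ℚ) ≠ 0 := Nat.cast_ne_zero.mpr hm.ne'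
    have hBv : ∀ y ∈ K, B v y = 0 := by
      intro y hy
      have : Bq ((m : ℚ) • w) y = 0 := by
        rw [map_smul, LinearMap.smul_apply, h0 y hy, smul_zero]
      rw [heq, hBq1] at this
      exact_mod_cast this
    have hBvall : ∀ u : Λ, B v u = 0 := by
      intro u
      have h1 : ∀ i ∈ Finset.range N, B v ((g ^ i) u) = B v u := by
        intro i _
        conv_lhs => rw [← hfix v hv i]
        exact hgBpow i v u
      have h2 : (N : ℤ) * B v u = 0 := by
        have : B v (S u) = ∑ i ∈ Finset.range N, B v ((g ^ i) u) := by
          rw [hSapp, map_sum]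
        rw [hBv (S u) (hSmem u), Finset.sum_congr rfl h1, Finset.sum_const,
          Finset.card_range] at this
        simpa [nsmul_eq_mul] using this.symm
      have hNZ : (N : ℤ) ≠ 0 := Int.natCast_ne_zero.mpr hN.ne'
      exact (mul_eq_zero.mp h2).resolve_left hNZ
    have hv0 : v = 0 := by
      have : B v = B 0 := by
        ext u; rw [hBvall u]; simp
      exact hBunimod.injective this
    rw [hv0, TensorProduct.tmul_zero] at heq
    exact (smul_eq_zero.mp heq).resolve_left hmQ
  refine ⟨?_, ?_⟩
  · rintro w ⟨x, rfl⟩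
    exact hmem x
  · ext w
    constructor
    · rintro ⟨x, rfl⟩
      exact ⟨hmem x, fun y hy => ⟨B x y, hBqP x y hy⟩⟩
    · rintro ⟨hwspan, hwint⟩
      -- build a splitting of K in Λ
      letI : Module ℤ (LinearMap.range (1 - g)) := Submodule.module _
      letI : Module ℤ (Λ ⧸ K) := Submodule.Quotient.module K
      haveI hfree : Module.Free ℤ (LinearMap.range (1 - g)) := by
        obtain ⟨n, b⟩ := (Submodule.basisOfPid (Module.Free.chooseBasis ℤ Λ)
          (LinearMap.range (1 - g)))
        exact Module.Free.of_basis b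
      haveI hfreeQ : Module.Free ℤ (Λ ⧸ K) :=
        Module.Free.of_equiv (LinearMap.quotKerEquivRange (1 - g)).symm
      obtain ⟨s, hs⟩ := Module.projective_lifting_property K.mkQ
        (LinearMap.id : (Λ ⧸ K) →ₗ[ℤ] (Λ ⧸ K)) (Submodule.mkQ_surjective K)
      set ρ : Λ →ₗ[ℤ] Λ := LinearMap.id - s ∘ₗ K.mkQ with hρdef
      have hρmem : ∀ u : Λ, ρ u ∈ K := by
        intro u
        have : K.mkQ (ρ u) = 0 := by
          have h1 : K.mkQ (s (K.mkQ u)) = K.mkQ u := by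
            have := congrArg (fun f => f (K.mkQ u)) hs
            simpa using this
          simp only [hρdef, LinearMap.sub_apply, LinearMap.comp_apply,
            LinearMap.id_apply, map_sub, h1, sub_self]
        rw [← Submodule.ker_mkQ K]
        exact this
      have hρfix : ∀ y ∈ K, ρ y = y := by
        intro y hy
        have h0 : K.mkQ y = 0 := by
          simpa [Submodule.mkQ_apply] using (Submodule.Quotient.mk_eq_zero K).mpr hy
        simp [hρdef, LinearMap.sub_apply, h0]
      -- the integral functional
      set F : Λ →ₗ[ℤ] ℚ := (Bq w) ∘ₗ ρ with hFdef
      have hFint : ∀ u : Λ, ∃ n : ℤ, F u = (n : ℚ) := fun u =>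
        hwint (ρ u) (hρmem u)
      have hfadd : ∀ u u' : Λ, (F (u + u')).num = (F u).num + (F u').num := by
        intro u u'
        obtain ⟨n, hn⟩ := hFint u
        obtain ⟨k, hk⟩ := hFint u'
        have : F (u + u') = ((n + k : ℤ) : ℚ) := by
          rw [map_add, hn, hk]; push_cast; ring
        rw [this, hn, hk, Rat.num_intCast, Rat.num_intCast, Rat.num_intCast]
      set f : Λ →ₗ[ℤ] ℤ :=
        { toFun := fun u => (F u).num
          map_add' := hfadd
          map_smul' := fun c u => by
            obtain ⟨n, hn⟩ := hFint u
            simp only [RingHom.id_apply]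
            rw [F.map_smul, hn,
              show (c • ((n : ℤ) : ℚ)) = ((c * n : ℤ) : ℚ) by
                push_cast; simp [zsmul_eq_mul],
              Rat.num_intCast, Rat.num_intCast]
            simp } with hfdef
      have hfF : ∀ u : Λ, ((f u : ℤ) : ℚ) = F u := by
        intro u
        obtain ⟨n, hn⟩ := hFint u
        simp [hfdef, hn, Rat.num_intCast]
      obtain ⟨z, hz⟩ := hBunimod.surjective f
      refine ⟨z, ?_⟩
      have hdiff : P z - w = 0 := by
        apply hnd _ (Submodule.sub_mem _ (hmem z) hwspan)
        intro y hy
        have h1 : Bq (P z) y = ((B z y : ℤ) : ℚ) := hBqP z y hy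
        have h2 : ((B z y : ℤ) : ℚ) = Bq w y := by
          have : B z y = f y := by rw [hz]
          rw [this, hfF]
          simp [hFdef, hρfix y hy]
        rw [map_sub, LinearMap.sub_apply, h1, h2, sub_self]
      exact sub_eq_zero.mp hdiff
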